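/- Let G and H be graphs. If Breaker has a winning strategy in the Maker-Breaker game MB(G,H), then the edge set of G can be partitioned into two classes neither of which contains the edge set of a copy of H (strategy stealing: Maker can play arbitrarily at turn 0 and at limit turns and otherwise mimic Breaker's winning strategy, producing a play in which neither player's graph contains a copy of H). -/

import Mathlib

open Cardinal

universe u v

/-- A strategy in a transfinite positional game with moves of type `α`:
given the current turn (an ordinal) and the history of all moves made at
earlier turns, it produces a move. -/
def MBStrategy (α : Type u) : Type (u + 1) :=
  ∀ γ : Ordinal.{u}, (∀ β : Ordinal.{u}, β < γ → α) → α

/-- A completed play of a transfinite positional game on the board `board`: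
an ordinal-indexed sequence of moves, each an element of the board that was not
claimed at any earlier turn, which goes on until every element of the board has
been claimed. -/
structure MBPlay {α : Type u} (board : Set α) : Type (u + 1) where
  len : Ordinal.{u}
  move : ∀ γ : Ordinal.{u}, γ < len → α
  move_mem : ∀ γ h, move γ h ∈ board
  move_inj : ∀ γ₁ h₁ γ₂ h₂, move γ₁ h₁ = move γ₂ h₂ → γ₁ = γ₂
  complete : ∀ e ∈ board, ∃ γ h, move γ h = e

namespace MBPlay

variable {α : Type u} {board : Set α}

/-- The set of board elements claimed at the turns satisfying `turns`. -/
def claimed (p : MBPlay board) (turns : Ordinal.{u} → Prop) : Set α :=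
  {e | ∃ γ h, turns γ ∧ p.move γ h = e}

/-- The play is consistent with the player moving at the turns satisfying
`turns` using the strategy `σ`. -/
def Follows (p : MBPlay board) (turns : Ordinal.{u} → Prop) (σ : MBStrategy α) : Prop :=
  ∀ γ h, turns γ → p.move γ h = σ γ (fun β hβ => p.move β (hβ.trans h))

end MBPlay

/-- In the Maker–Breaker game the moves alternate with Maker moving first: the
turn `γ` belongs to Maker iff `γ % 2 = 0`.  In particular turn `0` and all
limit turns belong to Maker, and Breaker answers Maker's preceding move. -/
def makerTurn (γ : Ordinal.{u}) : Prop := γ % 2 = 0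

/-- The turns on which Breaker moves in the Maker–Breaker game. -/
def breakerTurn (γ : Ordinal.{u}) : Prop := γ % 2 = 1

/-- A strategy is legal for the player moving at the turns satisfying `turns`
if at every position (arising at such a turn) in which some element of the
board is still unclaimed, it produces an unclaimed element of the board. -/
def MBStrategy.IsLegal {α : Type u} (σ : MBStrategy α) (board : Set α)
    (turns : Ordinal.{u} → Prop) : Prop :=
  ∀ (γ : Ordinal.{u}) (hist : ∀ β : Ordinal.{u}, β < γ → α), turns γ →
    (∀ β h, hist β h ∈ board) →
    (∀ β₁ h₁ β₂ h₂, hist β₁ h₁ = hist β₂ h₂ → β₁ = β₂) →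
    (∃ e ∈ board, ∀ β h, hist β h ≠ e) →
    σ γ hist ∈ board ∧ ∀ β h, hist β h ≠ σ γ hist

/-- `G` contains a copy of `H`, i.e. a subgraph isomorphic to `H`; equivalently
there is an injective graph homomorphism from `H` into `G`. -/
def ContainsCopy {V : Type u} {W : Type v} (G : SimpleGraph V) (H : SimpleGraph W) : Prop :=
  ∃ f : H →g G, Function.Injective f

/-- Maker has a winning strategy in the Maker–Breaker game `MB(G, H)`:
playing at the even turns (including turn `0` and all limit turns) of a
transfinite play on the edge set of `G`, she can ensure that whatever Breaker
does at the odd turns, at the end of the play the graph formed by her claimed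
edges contains a copy of `H`. -/
def MakerWins {V : Type u} {W : Type v} (G : SimpleGraph V) (H : SimpleGraph W) : Prop :=
  ∃ σ : MBStrategy (Sym2 V), σ.IsLegal G.edgeSet makerTurn ∧
    ∀ p : MBPlay G.edgeSet, p.Follows makerTurn σ →
      ContainsCopy (SimpleGraph.fromEdgeSet (p.claimed makerTurn)) H

/-- Breaker has a winning strategy in the Maker–Breaker game `MB(G, H)`:
playing at the odd turns of a transfinite play on the edge set of `G`, he can
ensure that at the end of the play the graph formed by Maker's claimed edges
does not contain a copy of `H`. -/
def BreakerWins {V : Type u} {W : Type v} (G : SimpleGraph V) (H : SimpleGraph W) : Prop :=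
  ∃ σ : MBStrategy (Sym2 V), σ.IsLegal G.edgeSet breakerTurn ∧
    ∀ p : MBPlay G.edgeSet, p.Follows breakerTurn σ →
      ¬ ContainsCopy (SimpleGraph.fromEdgeSet (p.claimed makerTurn)) H


namespace MBSteal

open Ordinal

/-! ### Ordinal parity helpers -/

lemma two_ne_zero' : (2 : Ordinal.{u}) ≠ 0 := by norm_num

lemma mod_two_eq_zero_or_one (γ : Ordinal.{u}) : γ % 2 = 0 ∨ γ % 2 = 1 := by
  have h : γ % 2 < 2 := Ordinal.mod_lt γ two_ne_zero'
  have h2 : (2 : Ordinal.{u}) = Order.succ 1 := by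
    rw [← Ordinal.add_one_eq_succ]; norm_num
  have h' : γ % 2 ≤ 1 := Order.lt_succ_iff.1 (h2 ▸ h)
  rcases lt_or_eq_of_le h' with h | h
  · left; rwa [Ordinal.lt_one_iff_zero] at h
  · right; exact h

lemma succ_lt_succ'' {a b : Ordinal.{u}} (h : a < b) : a + 1 < b + 1 := by
  rw [Ordinal.add_one_eq_succ, Ordinal.add_one_eq_succ]
  exact Order.succ_lt_succ h

lemma lt_succ_iff'' {a b : Ordinal.{u}} : a < b + 1 ↔ a ≤ b := by
  rw [Ordinal.add_one_eq_succ, Order.lt_succ_iff]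

lemma succ_inj'' {a b : Ordinal.{u}} (h : a + 1 = b + 1) : a = b := by
  apply le_antisymm
  · exact lt_succ_iff''.1 (h ▸ lt_succ_iff''.2 (le_refl a))
  · exact lt_succ_iff''.1 (h ▸ lt_succ_iff''.2 (le_refl b))

lemma succ_parity0 {δ : Ordinal.{u}} (h : δ % 2 = 0) : (δ + 1) % 2 = 1 := by
  conv_lhs => rw [← Ordinal.div_add_mod δ 2, h, add_zero]
  rw [Ordinal.mul_add_mod_self]
  exact Ordinal.mod_eq_of_lt one_lt_two

lemma succ_parity1 {δ : Ordinal.{u}} (h : δ % 2 = 1) : (δ + 1) % 2 = 0 := by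
  conv_lhs => rw [← Ordinal.div_add_mod δ 2, h, add_assoc]
  rw [Ordinal.mul_add_mod_self]
  have : (1 : Ordinal.{u}) + 1 = 2 := by norm_num
  rw [this, Ordinal.mod_self]

lemma odd_succ {γ : Ordinal.{u}} (h : γ % 2 = 1) :
    ∃ δ : Ordinal.{u}, γ = δ + 1 ∧ δ % 2 = 0 := by
  refine ⟨2 * (γ / 2), ?_, ?_⟩
  · conv_lhs => rw [← Ordinal.div_add_mod γ 2, h]
  · have := Ordinal.mul_add_mod_self 2 (γ / 2) 0
    rwa [add_zero, Ordinal.zero_mod] at this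

lemma even_succ_odd {γ δ : Ordinal.{u}} (hγδ : γ = δ + 1) (h : γ % 2 = 0) :
    δ % 2 = 1 := by
  rcases mod_two_eq_zero_or_one δ with h0 | h1
  · exfalso
    have := succ_parity0 h0
    rw [← hγδ, h] at this
    exact zero_ne_one this
  · exact h1

section Steal

variable {V : Type u} (G : SimpleGraph V) (σ : MBStrategy (Sym2 V)) (e₀ : Sym2 V)

attribute [local instance] Classical.propDecidable

/-- Choice of an unclaimed edge (or the default edge `e₀`). -/
noncomputable def pick (S : Set (Sym2 V)) : Sym2 V :=
  if h : ∃ e, e ∈ G.edgeSet ∧ e ∉ S then h.choose else e₀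

lemma pick_spec {S : Set (Sym2 V)} (h : ∃ e, e ∈ G.edgeSet ∧ e ∉ S) :
    pick G e₀ S ∈ G.edgeSet ∧ pick G e₀ S ∉ S := by
  rw [pick, dif_pos h]
  exact ⟨h.choose_spec.1, h.choose_spec.2⟩

/-- The body of the recursion for the auxiliary (virtual) play. -/
noncomputable def qBody (f : Ordinal.{u} → Sym2 V) (δ : Ordinal.{u})
    (ih : ∀ β : Ordinal.{u}, β < δ → Sym2 V) : Sym2 V :=
  if δ % 2 = 1 then σ δ ih
  else if f (δ + 1) ∈ G.edgeSet ∧ ∀ β h, ih β h ≠ f (δ + 1) then f (δ + 1)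
  else pick G e₀ {e | ∃ β h, ih β h = e}

/-- The auxiliary (virtual) play determined by a total move sequence `f`. -/
noncomputable def qAux (f : Ordinal.{u} → Sym2 V) : Ordinal.{u} → Sym2 V :=
  WellFounded.fix Ordinal.lt_wf (qBody G σ e₀ f)

lemma qAux_eq (f : Ordinal.{u} → Sym2 V) (δ : Ordinal.{u}) :
    qAux G σ e₀ f δ = qBody G σ e₀ f δ (fun β _ => qAux G σ e₀ f β) :=
  WellFounded.fix_eq _ _ _

lemma qAux_congr {f g : Ordinal.{u} → Sym2 V} (δ : Ordinal.{u})
    (h : ∀ ξ, ξ ≤ δ + 1 → f ξ = g ξ) : qAux G σ e₀ f δ = qAux G σ e₀ g δ := by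
  induction δ using Ordinal.induction with
  | h δ IH =>
    have hq : ∀ β (hβ : β < δ), qAux G σ e₀ f β = qAux G σ e₀ g β := by
      intro β hβ
      exact IH β hβ fun ξ hξ =>
        h ξ (le_trans hξ (le_of_lt (succ_lt_succ'' hβ)))
    have hfun : (fun β (hβ : β < δ) => qAux G σ e₀ f β)
        = fun β (hβ : β < δ) => qAux G σ e₀ g β := by
      funext β hβ; exact hq β hβ
    rw [qAux_eq, qAux_eq, hfun]
    unfold qBody
    simp only [h (δ + 1) le_rfl]

/-- The stolen move of Maker. -/
noncomputable def mimic (γ δ : Ordinal.{u}) (ih : ∀ β : Ordinal.{u}, β < γ → Sym2 V) :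
    Sym2 V :=
  σ δ (fun β _ => qAux G σ e₀ (fun ξ => if hξ : ξ < γ then ih ξ hξ else e₀) β)

/-- The body of the recursion for the real play. -/
noncomputable def pBody (γ : Ordinal.{u}) (ih : ∀ β : Ordinal.{u}, β < γ → Sym2 V) :
    Sym2 V :=
  if γ % 2 = 1 then σ γ ih
  else if hs : ∃ δ : Ordinal.{u}, γ = δ + 1 then
    if mimic G σ e₀ γ hs.choose ih ∈ G.edgeSet ∧
        ∀ β h, ih β h ≠ mimic G σ e₀ γ hs.choose ih then
      mimic G σ e₀ γ hs.choose ih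
    else pick G e₀ {e | ∃ β h, ih β h = e}
  else pick G e₀ {e | ∃ β h, ih β h = e}

/-- The real play. -/
noncomputable def pm : Ordinal.{u} → Sym2 V :=
  WellFounded.fix Ordinal.lt_wf (pBody G σ e₀)

lemma pm_eq (γ : Ordinal.{u}) :
    pm G σ e₀ γ = pBody G σ e₀ γ (fun β _ => pm G σ e₀ β) :=
  WellFounded.fix_eq _ _ _

/-- The virtual play. -/
noncomputable def qm : Ordinal.{u} → Sym2 V := qAux G σ e₀ (pm G σ e₀)

lemma pm_odd {γ : Ordinal.{u}} (h : γ % 2 = 1) :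
    pm G σ e₀ γ = σ γ (fun β (_ : β < γ) => pm G σ e₀ β) := by
  rw [pm_eq]; unfold pBody; rw [if_pos h]

lemma qm_odd {δ : Ordinal.{u}} (h : δ % 2 = 1) :
    qm G σ e₀ δ = σ δ (fun β (_ : β < δ) => qm G σ e₀ β) := by
  rw [qm, qAux_eq]; unfold qBody; rw [if_pos h]

lemma qm_even {δ : Ordinal.{u}} (h : δ % 2 = 0) :
    qm G σ e₀ δ =
      if pm G σ e₀ (δ + 1) ∈ G.edgeSet ∧
          ∀ β (h : β < δ), qm G σ e₀ β ≠ pm G σ e₀ (δ + 1) then pm G σ e₀ (δ + 1)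
      else pick G e₀ {e | ∃ β, ∃ _ : β < δ, qm G σ e₀ β = e} := by
  rw [qm, qAux_eq]; unfold qBody
  rw [if_neg (by rw [h]; exact zero_ne_one)]

lemma mimic_pm (δ : Ordinal.{u}) :
    mimic G σ e₀ (δ + 1) δ (fun β _ => pm G σ e₀ β)
      = σ δ (fun β (_ : β < δ) => qm G σ e₀ β) := by
  unfold mimic qm
  congr 1
  funext β hβ
  refine qAux_congr G σ e₀ β fun ξ hξ => ?_
  exact dif_pos (lt_of_le_of_lt hξ (succ_lt_succ'' hβ))

lemma pm_even_succ {δ : Ordinal.{u}} (h : δ % 2 = 1) :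
    pm G σ e₀ (δ + 1) =
      if qm G σ e₀ δ ∈ G.edgeSet ∧
          ∀ β (h : β < δ + 1), pm G σ e₀ β ≠ qm G σ e₀ δ then qm G σ e₀ δ
      else pick G e₀ {e | ∃ β, ∃ _ : β < δ + 1, pm G σ e₀ β = e} := by
  rw [pm_eq]; unfold pBody
  rw [if_neg (by rw [succ_parity1 h]; exact zero_ne_one)]
  have hs : ∃ δ' : Ordinal.{u}, δ + 1 = δ' + 1 := ⟨δ, rfl⟩
  rw [dif_pos hs]
  have hcs : hs.choose = δ := succ_inj'' hs.choose_spec.symm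
  rw [hcs, mimic_pm, ← qm_odd G σ e₀ h]

/-- Some edge is still unclaimed before turn `γ` of the real play. -/
def Unexh (γ : Ordinal.{u}) : Prop :=
  ∃ e ∈ G.edgeSet, ∀ β, β < γ → pm G σ e₀ β ≠ e

lemma unexh_mono {β γ : Ordinal.{u}} (h : β ≤ γ) (hu : Unexh G σ e₀ γ) :
    Unexh G σ e₀ β := by
  obtain ⟨e, he, hf⟩ := hu
  exact ⟨e, he, fun β' hβ' => hf β' (lt_of_lt_of_le hβ' h)⟩

theorem main (hσ : σ.IsLegal G.edgeSet breakerTurn) (γ : Ordinal.{u}) :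
    (Unexh G σ e₀ γ →
      pm G σ e₀ γ ∈ G.edgeSet ∧ ∀ β, β < γ → pm G σ e₀ β ≠ pm G σ e₀ γ) ∧
    (∀ δ, γ = δ + 1 → Unexh G σ e₀ γ →
      qm G σ e₀ δ ∈ G.edgeSet ∧ (∀ β, β < δ → qm G σ e₀ β ≠ qm G σ e₀ δ) ∧
      (∃ τ, τ ≤ δ + 1 ∧ pm G σ e₀ τ = qm G σ e₀ δ) ∧
      (δ % 2 = 0 → qm G σ e₀ δ = pm G σ e₀ (δ + 1))) := by
  induction γ using Ordinal.induction with
  | h γ IH =>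
  have h1 : Unexh G σ e₀ γ →
      pm G σ e₀ γ ∈ G.edgeSet ∧ ∀ β, β < γ → pm G σ e₀ β ≠ pm G σ e₀ γ := by
    intro hu
    obtain ⟨e, he, hfr⟩ := id hu
    have hpm : ∀ β, β < γ → pm G σ e₀ β ∈ G.edgeSet := fun β hβ =>
      ((IH β hβ).1 (unexh_mono G σ e₀ (le_of_lt hβ) hu)).1
    have hpinj : ∀ β₁ β₂, β₁ < γ → β₂ < γ → β₁ ≠ β₂ →
        pm G σ e₀ β₁ ≠ pm G σ e₀ β₂ := by
      intro β₁ β₂ h₁ h₂ hne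
      rcases lt_or_gt_of_ne hne with hlt | hgt
      · exact ((IH β₂ h₂).1 (unexh_mono G σ e₀ (le_of_lt h₂) hu)).2 β₁ hlt
      · exact fun hc =>
          ((IH β₁ h₁).1 (unexh_mono G σ e₀ (le_of_lt h₁) hu)).2 β₂ hgt hc.symm
    rcases mod_two_eq_zero_or_one γ with hev | hodd
    · by_cases hs : ∃ δ : Ordinal.{u}, γ = δ + 1
      · obtain ⟨δ, rfl⟩ := hs
        have hδ : δ % 2 = 1 := even_succ_odd rfl hev
        rw [pm_even_succ G σ e₀ hδ]
        split_ifs with hc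
        · exact ⟨hc.1, hc.2⟩
        · have hps := pick_spec G e₀
            (S := {e | ∃ β, ∃ _ : β < δ + 1, pm G σ e₀ β = e})
            ⟨e, he, fun hmem => by obtain ⟨β, hβ, hbe⟩ := hmem; exact hfr β hβ hbe⟩
          exact ⟨hps.1, fun β hβ hc' => hps.2 ⟨β, hβ, hc'⟩⟩
      · rw [pm_eq]; unfold pBody
        rw [if_neg (by rw [hev]; exact zero_ne_one), dif_neg hs]
        have hps := pick_spec G e₀
          (S := {e | ∃ β, ∃ h : β < γ, pm G σ e₀ β = e})
          ⟨e, he, fun hmem => by obtain ⟨β, hβ, hbe⟩ := hmem; exact hfr β hβ hbe⟩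
        exact ⟨hps.1, fun β hβ hc' => hps.2 ⟨β, hβ, hc'⟩⟩
    · rw [pm_odd G σ e₀ hodd]
      exact hσ γ (fun β (_ : β < γ) => pm G σ e₀ β) hodd
        (fun β hβ => hpm β hβ)
        (fun β₁ hβ₁ β₂ hβ₂ heq =>
          by_contra fun hne => hpinj β₁ β₂ hβ₁ hβ₂ hne heq)
        ⟨e, he, fun β hβ => hfr β hβ⟩
  refine ⟨h1, ?_⟩
  intro δ hγδ hu
  subst hγδ
  obtain ⟨e, he, hfr⟩ := id hu
  have hqg : ∀ β, β < δ →
      qm G σ e₀ β ∈ G.edgeSet ∧ (∀ β', β' < β → qm G σ e₀ β' ≠ qm G σ e₀ β) ∧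
      ∃ τ, τ ≤ β + 1 ∧ pm G σ e₀ τ = qm G σ e₀ β := by
    intro β hβ
    have h := (IH (β + 1) (succ_lt_succ'' hβ)).2 β rfl
      (unexh_mono G σ e₀ (le_of_lt (succ_lt_succ'' hβ)) hu)
    exact ⟨h.1, h.2.1, h.2.2.1⟩
  rcases mod_two_eq_zero_or_one δ with hδ0 | hδ1
  · have hp1 := h1 hu
    have hC : pm G σ e₀ (δ + 1) ∈ G.edgeSet ∧
        ∀ β, ∀ _ : β < δ, qm G σ e₀ β ≠ pm G σ e₀ (δ + 1) := by
      refine ⟨hp1.1, fun β hβ => ?_⟩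
      obtain ⟨τ, hτ, hpe⟩ := (hqg β hβ).2.2
      rw [← hpe]
      exact hp1.2 τ (lt_of_le_of_lt hτ (succ_lt_succ'' hβ))
    have heq : qm G σ e₀ δ = pm G σ e₀ (δ + 1) := by
      rw [qm_even G σ e₀ hδ0, if_pos hC]
    refine ⟨by rw [heq]; exact hp1.1, ?_, ⟨δ + 1, le_rfl, heq.symm⟩, fun _ => heq⟩
    intro β hβ
    rw [heq]
    exact hC.2 β hβ
  · have hlc := hσ δ (fun β (_ : β < δ) => qm G σ e₀ β) hδ1
      (fun β hβ => (hqg β hβ).1)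
      (fun β₁ h₁ β₂ h₂ heq => by
        rcases lt_trichotomy β₁ β₂ with h | h | h
        · exact absurd heq ((hqg β₂ h₂).2.1 β₁ h)
        · exact h
        · exact absurd heq.symm ((hqg β₁ h₁).2.1 β₂ h))
      ⟨e, he, fun β hβ => by
        show qm G σ e₀ β ≠ e
        obtain ⟨τ, hτ, hpe⟩ := (hqg β hβ).2.2
        rw [← hpe]
        exact hfr τ (lt_of_le_of_lt hτ (succ_lt_succ'' hβ))⟩
    rw [← qm_odd G σ e₀ hδ1] at hlc
    refine ⟨hlc.1, fun β hβ => hlc.2 β hβ, ?_,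
      fun h0 => absurd (hδ1.symm.trans h0) one_ne_zero⟩
    by_cases hc : qm G σ e₀ δ ∈ G.edgeSet ∧
        ∀ β, ∀ _ : β < δ + 1, pm G σ e₀ β ≠ qm G σ e₀ δ
    · exact ⟨δ + 1, le_rfl, by rw [pm_even_succ G σ e₀ hδ1, if_pos hc]⟩
    · push_neg at hc
      obtain ⟨β, hβ, hbe⟩ := hc hlc.1
      exact ⟨β, le_of_lt hβ, hbe⟩

theorem qmain (hσ : σ.IsLegal G.edgeSet breakerTurn) (δ : Ordinal.{u})
    (hu : ∃ e ∈ G.edgeSet, ∀ β, β < δ → qm G σ e₀ β ≠ e) :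
    qm G σ e₀ δ ∈ G.edgeSet ∧ ∀ β, β < δ → qm G σ e₀ β ≠ qm G σ e₀ δ := by
  induction δ using Ordinal.induction with
  | h δ IH =>
  obtain ⟨e, he, hfr⟩ := id hu
  have hqu : ∀ β, β < δ → ∃ e ∈ G.edgeSet, ∀ β', β' < β → qm G σ e₀ β' ≠ e :=
    fun β hβ => ⟨e, he, fun β' hβ' => hfr β' (hβ'.trans hβ)⟩
  rcases mod_two_eq_zero_or_one δ with h0 | h1
  · rw [qm_even G σ e₀ h0]
    split_ifs with hc
    · exact ⟨hc.1, fun β hβ => hc.2 β hβ⟩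
    · have hps := pick_spec G e₀
        (S := {e | ∃ β, ∃ _ : β < δ, qm G σ e₀ β = e})
        ⟨e, he, fun hm => by obtain ⟨β, hβ, hbe⟩ := hm; exact hfr β hβ hbe⟩
      exact ⟨hps.1, fun β hβ hc' => hps.2 ⟨β, hβ, hc'⟩⟩
  · rw [qm_odd G σ e₀ h1]
    exact hσ δ (fun β (_ : β < δ) => qm G σ e₀ β) h1
      (fun β hβ => (IH β hβ (hqu β hβ)).1)
      (fun β₁ h₁ β₂ h₂ heq => by
        rcases lt_trichotomy β₁ β₂ with h | h | h
        · exact absurd heq ((IH β₂ h₂ (hqu β₂ h₂)).2 β₁ h)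
        · exact h
        · exact absurd heq.symm ((IH β₁ h₁ (hqu β₁ h₁)).2 β₂ h))
      ⟨e, he, fun β hβ => hfr β hβ⟩

lemma exists_exhaust {f : Ordinal.{u} → Sym2 V}
    (hinj : ∀ γ, (∃ e ∈ G.edgeSet, ∀ β, β < γ → f β ≠ e) →
      ∀ β, β < γ → f β ≠ f γ) :
    ∃ γ : Ordinal.{u}, ∀ e ∈ G.edgeSet, ∃ β, ∃ _ : β < γ, f β = e := by
  by_contra hcon
  push_neg at hcon
  have hU : ∀ γ : Ordinal.{u}, ∃ e ∈ G.edgeSet, ∀ β, β < γ → f β ≠ e := by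
    intro γ
    obtain ⟨e, he, hfe⟩ := hcon γ
    exact ⟨e, he, fun β hβ => hfe β hβ⟩
  have hI : ∀ β γ : Ordinal.{u}, β < γ → f β ≠ f γ :=
    fun β γ h => hinj γ (hU γ) β h
  set o : Ordinal.{u} := (Order.succ #(Sym2 V)).ord with ho
  have hfi : Function.Injective
      (fun x : o.ToType => f ((Ordinal.ToType.mk (o := o)).symm x).1) := by
    intro x y hxy
    rcases lt_trichotomy (((Ordinal.ToType.mk (o := o)).symm x).1)
      (((Ordinal.ToType.mk (o := o)).symm y).1) with h | h | h
    · exact absurd hxy (hI _ _ h)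
    · have : (Ordinal.ToType.mk (o := o)).symm x = (Ordinal.ToType.mk (o := o)).symm y :=
        Subtype.ext h
      exact (Ordinal.ToType.mk (o := o)).symm.injective this
    · exact absurd hxy.symm (hI _ _ h)
  have hle := Cardinal.mk_le_of_injective hfi
  rw [mk_toType, ho, Cardinal.card_ord] at hle
  exact (Order.lt_succ #(Sym2 V)).not_ge hle

/-- The length of the real play. -/
noncomputable def plen : Ordinal.{u} :=
  sInf {γ | ∀ e ∈ G.edgeSet, ∃ β, ∃ _ : β < γ, pm G σ e₀ β = e}

lemma plen_spec (hσ : σ.IsLegal G.edgeSet breakerTurn) :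
    ∀ e ∈ G.edgeSet, ∃ β, ∃ _ : β < plen G σ e₀, pm G σ e₀ β = e :=
  csInf_mem (exists_exhaust G (f := pm G σ e₀)
    (fun γ hu => ((main G σ e₀ hσ γ).1 hu).2))

lemma unexh_of_lt_plen (hσ : σ.IsLegal G.edgeSet breakerTurn) {γ : Ordinal.{u}}
    (h : γ < plen G σ e₀) : Unexh G σ e₀ γ := by
  by_contra hcon
  unfold Unexh at hcon
  push_neg at hcon
  have hmem : γ ∈ {γ | ∀ e ∈ G.edgeSet, ∃ β, ∃ _ : β < γ, pm G σ e₀ β = e} := by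
    intro e he
    obtain ⟨β, hβ, hbe⟩ := hcon e he
    exact ⟨β, hβ, hbe⟩
  exact absurd h (not_lt_of_ge (csInf_le (OrderBot.bddBelow _) hmem))

/-- The length of the virtual play. -/
noncomputable def qlen : Ordinal.{u} :=
  sInf {δ | ∀ e ∈ G.edgeSet, ∃ β, ∃ _ : β < δ, qm G σ e₀ β = e}

lemma qlen_spec (hσ : σ.IsLegal G.edgeSet breakerTurn) :
    ∀ e ∈ G.edgeSet, ∃ β, ∃ _ : β < qlen G σ e₀, qm G σ e₀ β = e :=
  csInf_mem (exists_exhaust G (f := qm G σ e₀)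
    (fun δ hu => (qmain G σ e₀ hσ δ hu).2))

lemma qunexh_of_lt_qlen (hσ : σ.IsLegal G.edgeSet breakerTurn) {δ : Ordinal.{u}}
    (h : δ < qlen G σ e₀) :
    ∃ e ∈ G.edgeSet, ∀ β, β < δ → qm G σ e₀ β ≠ e := by
  by_contra hcon
  push_neg at hcon
  have hmem : δ ∈ {δ | ∀ e ∈ G.edgeSet, ∃ β, ∃ _ : β < δ, qm G σ e₀ β = e} := by
    intro e he
    obtain ⟨β, hβ, hbe⟩ := hcon e he
    exact ⟨β, hβ, hbe⟩
  exact absurd h (not_lt_of_ge (csInf_le (OrderBot.bddBelow _) hmem))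

lemma lt_qlen (hσ : σ.IsLegal G.edgeSet breakerTurn) {δ : Ordinal.{u}}
    (hq : ∃ e ∈ G.edgeSet, ∀ β, β < δ → qm G σ e₀ β ≠ e) : δ < qlen G σ e₀ := by
  by_contra h
  push_neg at h
  obtain ⟨e, he, hfr⟩ := hq
  obtain ⟨β, hβ, hbe⟩ := qlen_spec G σ e₀ hσ e he
  exact hfr β (lt_of_lt_of_le hβ h) hbe

lemma qunexh_of_unexh (hσ : σ.IsLegal G.edgeSet breakerTurn) {δ : Ordinal.{u}}
    (hu : Unexh G σ e₀ (δ + 1)) :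
    ∃ e ∈ G.edgeSet, ∀ β, β < δ → qm G σ e₀ β ≠ e := by
  obtain ⟨e, he, hfr⟩ := id hu
  refine ⟨e, he, fun β hβ => ?_⟩
  obtain ⟨τ, hτ, hpe⟩ := ((main G σ e₀ hσ (β + 1)).2 β rfl
    (unexh_mono G σ e₀ (le_of_lt (succ_lt_succ'' hβ)) hu)).2.2.1
  rw [← hpe]
  exact hfr τ (lt_of_le_of_lt hτ (succ_lt_succ'' hβ))

end Steal

lemma not_containsCopy_mono {V : Type u} {W : Type v} {H : SimpleGraph W}
    {S T : Set (Sym2 V)} (hST : S ⊆ T)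
    (h : ¬ ContainsCopy (SimpleGraph.fromEdgeSet T) H) :
    ¬ ContainsCopy (SimpleGraph.fromEdgeSet S) H := by
  rintro ⟨f, hf⟩
  exact h ⟨(SimpleGraph.Hom.ofLE (SimpleGraph.fromEdgeSet_mono hST)).comp f, hf⟩

end MBSteal

/-- (Strategy stealing.)  If Breaker has a winning strategy in
the Maker–Breaker game `MB(G, H)`, then the edge set of `G` can be partitioned
into two classes neither of which contains the edge set of a copy of `H`. -/
theorem edge_partition_of_breakerWins {V : Type u} {W : Type v}
    (G : SimpleGraph V) (H : SimpleGraph W) (hB : BreakerWins G H) :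
    ∃ M B : Set (Sym2 V), M ∪ B = G.edgeSet ∧ Disjoint M B ∧
      ¬ ContainsCopy (SimpleGraph.fromEdgeSet M) H ∧
      ¬ ContainsCopy (SimpleGraph.fromEdgeSet B) H := by
  classical
  obtain ⟨σ, hσ, hw⟩ := hB
  by_cases hE : G.edgeSet = ∅
  · let P0 : MBPlay G.edgeSet :=
      { len := 0
        move := fun γ h => ((zero_le (a := γ)).not_gt h).elim
        move_mem := fun γ h => ((zero_le (a := γ)).not_gt h).elim
        move_inj := fun γ₁ h₁ => ((zero_le (a := γ₁)).not_gt h₁).elim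
        complete := fun e he => by
          rw [hE] at he; exact absurd he (Set.notMem_empty e) }
    have hfol : P0.Follows breakerTurn σ := fun γ h _ => ((zero_le (a := γ)).not_gt h).elim
    have hcl : P0.claimed makerTurn = (∅ : Set (Sym2 V)) := by
      ext x
      simp only [MBPlay.claimed, Set.mem_setOf_eq, Set.mem_empty_iff_false, iff_false]
      rintro ⟨γ, h, _⟩
      exact (zero_le (a := γ)).not_gt h
    have hnc := hw P0 hfol
    rw [hcl] at hnc
    exact ⟨∅, ∅, by rw [Set.union_empty, hE], by simp, hnc, hnc⟩
  · obtain ⟨e₀, he₀⟩ := Set.nonempty_iff_ne_empty.2 hE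
    let P : MBPlay G.edgeSet :=
      { len := MBSteal.plen G σ e₀
        move := fun γ _ => MBSteal.pm G σ e₀ γ
        move_mem := fun γ h =>
          ((MBSteal.main G σ e₀ hσ γ).1 (MBSteal.unexh_of_lt_plen G σ e₀ hσ h)).1
        move_inj := fun γ₁ h₁ γ₂ h₂ heq => by
          rcases lt_trichotomy γ₁ γ₂ with h | h | h
          · exact absurd heq
              (((MBSteal.main G σ e₀ hσ γ₂).1
                (MBSteal.unexh_of_lt_plen G σ e₀ hσ h₂)).2 γ₁ h)
          · exact h
          · exact absurd heq.symm
              (((MBSteal.main G σ e₀ hσ γ₁).1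
                (MBSteal.unexh_of_lt_plen G σ e₀ hσ h₁)).2 γ₂ h)
        complete := MBSteal.plen_spec G σ e₀ hσ }
    let Q : MBPlay G.edgeSet :=
      { len := MBSteal.qlen G σ e₀
        move := fun δ _ => MBSteal.qm G σ e₀ δ
        move_mem := fun δ h =>
          (MBSteal.qmain G σ e₀ hσ δ (MBSteal.qunexh_of_lt_qlen G σ e₀ hσ h)).1
        move_inj := fun δ₁ h₁ δ₂ h₂ heq => by
          rcases lt_trichotomy δ₁ δ₂ with h | h | h
          · exact absurd heq
              ((MBSteal.qmain G σ e₀ hσ δ₂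
                (MBSteal.qunexh_of_lt_qlen G σ e₀ hσ h₂)).2 δ₁ h)
          · exact h
          · exact absurd heq.symm
              ((MBSteal.qmain G σ e₀ hσ δ₁
                (MBSteal.qunexh_of_lt_qlen G σ e₀ hσ h₁)).2 δ₂ h)
        complete := MBSteal.qlen_spec G σ e₀ hσ }
    have hfolP : P.Follows breakerTurn σ := fun γ h hb => MBSteal.pm_odd G σ e₀ hb
    have hfolQ : Q.Follows breakerTurn σ := fun δ h hb => MBSteal.qm_odd G σ e₀ hb
    have hMno := hw P hfolP
    have hQno := hw Q hfolQ
    have hBsub : P.claimed breakerTurn ⊆ Q.claimed makerTurn := by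
      rintro x ⟨γ, hγ, hbt, heq⟩
      obtain ⟨δ, rfl, hδ0⟩ := MBSteal.odd_succ hbt
      have hu := MBSteal.unexh_of_lt_plen G σ e₀ hσ hγ
      have h4 := ((MBSteal.main G σ e₀ hσ (δ + 1)).2 δ rfl hu).2.2.2 hδ0
      refine ⟨δ, MBSteal.lt_qlen G σ e₀ hσ (MBSteal.qunexh_of_unexh G σ e₀ hσ hu),
        hδ0, ?_⟩
      show MBSteal.qm G σ e₀ δ = x
      rw [h4]
      exact heq
    refine ⟨P.claimed makerTurn, P.claimed breakerTurn, ?_, ?_, hMno,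
      MBSteal.not_containsCopy_mono hBsub hQno⟩
    · apply Set.Subset.antisymm
      · rintro x (⟨γ, h, _, heq⟩ | ⟨γ, h, _, heq⟩) <;> exact heq ▸ P.move_mem γ h
      · intro x hx
        obtain ⟨γ, h, heq⟩ := P.complete x hx
        rcases MBSteal.mod_two_eq_zero_or_one γ with h0 | h1
        · exact Or.inl ⟨γ, h, h0, heq⟩
        · exact Or.inr ⟨γ, h, h1, heq⟩
    · rw [Set.disjoint_left]
      rintro x ⟨γ₁, h₁, ht₁, heq₁⟩ ⟨γ₂, h₂, ht₂, heq₂⟩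
      have hgg := P.move_inj γ₁ h₁ γ₂ h₂ (heq₁.trans heq₂.symm)
      rw [hgg] at ht₁
      exact zero_ne_one ((ht₁ : γ₂ % 2 = 0).symm.trans (ht₂ : γ₂ % 2 = 1))
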